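/- The language L_3 = {a^n b^n c^n : n ≥ 1} is (f, h_R)-tuple-substitutable for every f, where h_R is the transition morphism of the four-state DFA for R = a*b*c*: for all d ≥ 1 and all d-tuples x, y of words with h_R(x_i) = h_R(y_i) for each i, if some arity-d sentence context E satisfies E[x] ∈ L_3 and E[y] ∈ L_3, then for every arity-d sentence context F, F[x] ∈ L_3 if and only if F[y] ∈ L_3. -/

import Mathlib

inductive ABC : Type
  | a | b | c
deriving DecidableEq

/-- `L₃ = {aⁿbⁿcⁿ : n ≥ 1}`. -/
def L3 : Set (List ABC) :=
  {w | ∃ n : ℕ, 1 ≤ n ∧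
    w = List.replicate n ABC.a ++ List.replicate n ABC.b ++ List.replicate n ABC.c}

/-- States of the standard four-state DFA for `R = a*b*c*`. -/
inductive St : Type
  | s0 | s1 | s2 | bot
deriving DecidableEq

/-- Letter transitions of the DFA for `R = a*b*c*`. -/
def step : ABC → St → St
  | ABC.a, St.s0 => St.s0
  | ABC.a, _ => St.bot
  | ABC.b, St.s0 => St.s1
  | ABC.b, St.s1 => St.s1
  | ABC.b, _ => St.bot
  | ABC.c, St.s0 => St.s2
  | ABC.c, St.s1 => St.s2
  | ABC.c, St.s2 => St.s2
  | ABC.c, _ => St.bot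

/-- The transition morphism `h_R`. -/
def hR (w : List ABC) : St → St :=
  fun q => w.foldl (fun s ch => step ch s) q

structure SContext (α : Type) (d : ℕ) where
  perm : Equiv.Perm (Fin d)
  bound : Fin (d + 1) → List α

def SContext.fill {α : Type} {d : ℕ} (E : SContext α d) (x : Fin d → List α) : List α :=
  (List.ofFn fun i : Fin d => E.bound i.castSucc ++ x (E.perm i)).flatten ++
    E.bound (Fin.last d)

namespace L3Aux

open ABC St

lemma hR_nil : hR [] = id := rfl

lemma hR_append (u v : List ABC) : ∀ q, hR (u ++ v) q = hR v (hR u q) := by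
  intro q; simp [hR, List.foldl_append]

lemma hR_bot (w : List ABC) : hR w St.bot = St.bot := by
  induction w with
  | nil => rfl
  | cons ch t ih =>
    have : step ch St.bot = St.bot := by cases ch <;> rfl
    simpa [hR, this] using ih

lemma hR_cons (ch : ABC) (t : List ABC) (q : St) :
    hR (ch :: t) q = hR t (step ch q) := rfl

lemma hR_ne_s0 (w : List ABC) : ∀ q, q ≠ St.s0 → hR w q ≠ St.s0 := by
  induction w with
  | nil => intro q h; simpa [hR] using h
  | cons ch t ih =>
    intro q h
    rw [hR_cons]
    apply ih
    cases ch <;> cases q <;> simp_all [step]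

lemma allA (w : List ABC) (h : hR w St.s0 = St.s0) :
    w = List.replicate w.length ABC.a := by
  induction w with
  | nil => rfl
  | cons ch t ih =>
    rw [hR_cons] at h
    cases ch with
    | a => simpa [List.replicate_succ] using ih (by simpa [step] using h)
    | b => exact absurd h (hR_ne_s0 t St.s1 (by simp))
    | c => exact absurd h (hR_ne_s0 t St.s2 (by simp))

lemma allC (w : List ABC) (h : hR w St.s2 = St.s2) :
    w = List.replicate w.length ABC.c := by
  induction w with
  | nil => rfl
  | cons ch t ih =>
    rw [hR_cons] at h
    cases ch with
    | a => rw [show step ABC.a St.s2 = St.bot from rfl, hR_bot] at h; exact absurd h (by simp)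
    | b => rw [show step ABC.b St.s2 = St.bot from rfl, hR_bot] at h; exact absurd h (by simp)
    | c => simpa [List.replicate_succ] using ih (by simpa [step] using h)

lemma eq_nil_of_hR_id (w : List ABC) (h : hR w = id) : w = [] := by
  have h0 : hR w St.s0 = St.s0 := by rw [h]; rfl
  have h2 : hR w St.s2 = St.s2 := by rw [h]; rfl
  have hA := allA w h0
  have hC := allC w h2
  cases w with
  | nil => rfl
  | cons ch t =>
    simp [List.replicate_succ] at hA hC
    rw [hA.1] at hC
    exact absurd hC.1 (by simp)

lemma fromS2 (w : List ABC) (h : hR w St.s2 ≠ St.bot) :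
    ∃ l, w = List.replicate l ABC.c := by
  induction w with
  | nil => exact ⟨0, rfl⟩
  | cons ch t ih =>
    rw [hR_cons] at h
    cases ch with
    | a => rw [show step ABC.a St.s2 = St.bot from rfl, hR_bot] at h; exact absurd rfl h
    | b => rw [show step ABC.b St.s2 = St.bot from rfl, hR_bot] at h; exact absurd rfl h
    | c =>
      obtain ⟨l, hl⟩ := ih (by simpa [step] using h)
      exact ⟨l + 1, by simp [List.replicate_succ, hl]⟩

lemma fromS1 (w : List ABC) (h : hR w St.s1 ≠ St.bot) :
    ∃ j l, w = List.replicate j ABC.b ++ List.replicate l ABC.c := by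
  induction w with
  | nil => exact ⟨0, 0, rfl⟩
  | cons ch t ih =>
    rw [hR_cons] at h
    cases ch with
    | a => rw [show step ABC.a St.s1 = St.bot from rfl, hR_bot] at h; exact absurd rfl h
    | b =>
      obtain ⟨j, l, hl⟩ := ih (by simpa [step] using h)
      exact ⟨j + 1, l, by simp [List.replicate_succ, hl]⟩
    | c =>
      obtain ⟨l, hl⟩ := fromS2 t (by simpa [step] using h)
      exact ⟨0, l + 1, by simp [List.replicate_succ, hl]⟩

lemma fromS0 (w : List ABC) (h : hR w St.s0 ≠ St.bot) :
    ∃ i j l, w = List.replicate i ABC.a ++ List.replicate j ABC.b ++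
      List.replicate l ABC.c := by
  induction w with
  | nil => exact ⟨0, 0, 0, rfl⟩
  | cons ch t ih =>
    rw [hR_cons] at h
    cases ch with
    | a =>
      obtain ⟨i, j, l, hl⟩ := ih (by simpa [step] using h)
      exact ⟨i + 1, j, l, by simp [List.replicate_succ, hl]⟩
    | b =>
      obtain ⟨j, l, hl⟩ := fromS1 t (by simpa [step] using h)
      exact ⟨0, j + 1, l, by simp [List.replicate_succ, hl]⟩
    | c =>
      obtain ⟨l, hl⟩ := fromS2 t (by simpa [step] using h)
      exact ⟨0, 0, l + 1, by simp [List.replicate_succ, hl]⟩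

lemma runA (n : ℕ) : hR (List.replicate n ABC.a) St.s0 = St.s0 := by
  induction n with
  | zero => rfl
  | succ n ih => rw [List.replicate_succ, hR_cons]; exact ih

lemma runB (n : ℕ) : hR (List.replicate n ABC.b) St.s1 = St.s1 := by
  induction n with
  | zero => rfl
  | succ n ih => rw [List.replicate_succ, hR_cons]; exact ih

lemma runC (n : ℕ) : hR (List.replicate n ABC.c) St.s2 = St.s2 := by
  induction n with
  | zero => rfl
  | succ n ih => rw [List.replicate_succ, hR_cons]; exact ih

lemma mem_L3_iff (w : List ABC) :
    w ∈ L3 ↔ hR w St.s0 ≠ St.bot ∧ w.count ABC.a = w.count ABC.b ∧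
      w.count ABC.b = w.count ABC.c ∧ w ≠ [] := by
  constructor
  · rintro ⟨n, hn, rfl⟩
    obtain ⟨m, rfl⟩ := Nat.exists_eq_add_of_le hn
    refine ⟨?_, by simp [List.count_replicate], by simp [List.count_replicate], by simp⟩
    rw [hR_append, hR_append, runA]
    have hb1 : hR (List.replicate (1 + m) ABC.b) St.s0 = St.s1 := by
      rw [show 1 + m = m + 1 from by omega, List.replicate_succ, hR_cons]
      exact runB m
    have hc1 : hR (List.replicate (1 + m) ABC.c) St.s1 = St.s2 := by
      rw [show 1 + m = m + 1 from by omega, List.replicate_succ, hR_cons]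
      exact runC m
    rw [hb1, hc1]
    simp
  · rintro ⟨hbot, hab, hbc, hne⟩
    obtain ⟨i, j, l, rfl⟩ := fromS0 w hbot
    have ha : (List.replicate i ABC.a ++ List.replicate j ABC.b ++
        List.replicate l ABC.c).count ABC.a = i := by simp [List.count_replicate]
    have hb : (List.replicate i ABC.a ++ List.replicate j ABC.b ++
        List.replicate l ABC.c).count ABC.b = j := by simp [List.count_replicate]
    have hc : (List.replicate i ABC.a ++ List.replicate j ABC.b ++
        List.replicate l ABC.c).count ABC.c = l := by simp [List.count_replicate]
    rw [ha, hb] at hab; rw [hb, hc] at hbc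
    subst hab; subst hbc
    refine ⟨i, ?_, rfl⟩
    rcases Nat.eq_zero_or_pos i with h0 | h1
    · subst h0; simp at hne
    · exact h1

lemma count_fill {d : ℕ} (F : SContext ABC d) (x : Fin d → List ABC) (ℓ : ABC) :
    (F.fill x).count ℓ =
      ((∑ i : Fin d, (F.bound i.castSucc).count ℓ) + (F.bound (Fin.last d)).count ℓ)
        + ∑ i : Fin d, (x i).count ℓ := by
  rw [SContext.fill, List.count_append, List.count_flatten, List.map_ofFn,
    List.sum_ofFn]
  have : ∀ i : Fin d, ((List.count ℓ) ∘ fun i : Fin d =>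
      F.bound i.castSucc ++ x (F.perm i)) i =
      (F.bound i.castSucc).count ℓ + (x (F.perm i)).count ℓ := by
    intro i; simp [List.count_append]
  rw [Finset.sum_congr rfl fun i _ => this i, Finset.sum_add_distrib,
    Equiv.sum_comp F.perm (fun i => (x i).count ℓ)]
  ring

lemma hR_flatten (L : List (List ABC)) : ∀ q, hR L.flatten q =
    L.foldl (fun s w => hR w s) q := by
  induction L with
  | nil => intro q; rfl
  | cons w t ih => intro q; rw [List.flatten_cons, hR_append]; exact ih _

lemma hR_fill_congr {d : ℕ} (F : SContext ABC d) (x y : Fin d → List ABC)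
    (h : ∀ i, hR (x i) = hR (y i)) : hR (F.fill x) = hR (F.fill y) := by
  funext q
  rw [SContext.fill, SContext.fill, hR_append, hR_append, hR_flatten, hR_flatten]
  congr 1
  rw [← List.foldl_map (f := hR) (g := fun s f => f s), ← List.foldl_map (f := hR) (g := fun s f => f s),
    List.map_ofFn, List.map_ofFn]
  have heq : (hR ∘ fun i : Fin d => F.bound i.castSucc ++ x (F.perm i)) =
      (hR ∘ fun i : Fin d => F.bound i.castSucc ++ y (F.perm i)) := by
    funext i q'
    simp only [Function.comp]
    rw [hR_append, hR_append, h]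
  rw [heq]

lemma fill_eq_nil_parts {d : ℕ} (F : SContext ABC d) (y : Fin d → List ABC)
    (h : F.fill y = []) :
    (∀ i : Fin d, y i = []) ∧ (∀ i : Fin d, F.bound i.castSucc = []) ∧
      F.bound (Fin.last d) = [] := by
  rw [SContext.fill, List.append_eq_nil_iff, List.flatten_eq_nil_iff] at h
  have hall : ∀ i : Fin d, F.bound i.castSucc ++ y (F.perm i) = [] := by
    intro i
    exact h.1 _ (by rw [List.mem_ofFn]; exact ⟨i, rfl⟩)
  have hy : ∀ i : Fin d, y i = [] := by
    intro j
    have := hall (F.perm.symm j)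
    rw [List.append_eq_nil_iff] at this
    simpa using this.2
  have hb : ∀ i : Fin d, F.bound i.castSucc = [] := by
    intro i
    have := hall i
    rw [List.append_eq_nil_iff] at this
    exact this.1
  exact ⟨hy, hb, h.2⟩

lemma main_dir {d : ℕ} (x y : Fin d → List ABC)
    (hxy : ∀ i, hR (x i) = hR (y i))
    (E : SContext ABC d) (hEx : E.fill x ∈ L3) (hEy : E.fill y ∈ L3)
    (F : SContext ABC d) (hFx : F.fill x ∈ L3) : F.fill y ∈ L3 := by
  rw [mem_L3_iff] at hEx hEy hFx ⊢
  obtain ⟨_, hEab, hEbc, _⟩ := hEx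
  obtain ⟨_, hEab', hEbc', _⟩ := hEy
  obtain ⟨hFbot, hFab, hFbc, hFne⟩ := hFx
  rw [count_fill, count_fill] at hEab hEbc hEab' hEbc' hFab hFbc
  refine ⟨?_, ?_, ?_, ?_⟩
  · rw [← hR_fill_congr F x y hxy]; exact hFbot
  · rw [count_fill, count_fill]; omega
  · rw [count_fill, count_fill]; omega
  · intro hnil
    obtain ⟨hy, hb, hlast⟩ := fill_eq_nil_parts F y hnil
    have hx : ∀ i : Fin d, x i = [] := by
      intro i
      apply eq_nil_of_hR_id
      rw [hxy i, hy i, hR_nil]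
    apply hFne
    rw [SContext.fill, List.append_eq_nil_iff, List.flatten_eq_nil_iff]
    refine ⟨?_, hlast⟩
    intro l hl
    rw [List.mem_ofFn] at hl
    obtain ⟨i, rfl⟩ := hl
    simp [hb i, hx (F.perm i)]

end L3Aux

/-- `L₃` is `(f, h_R)`-tuple-substitutable for every `f`: for all `d ≥ 1`
and all `d`-tuples with componentwise equal `h_R`-images, sharing one accepting sentence
context forces equality of all accepting sentence contexts. -/
theorem L3_tuple_substitutable :
    ∀ d : ℕ, 1 ≤ d → ∀ x y : Fin d → List ABC,
      (∀ i, hR (x i) = hR (y i)) →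
      (∃ E : SContext ABC d, E.fill x ∈ L3 ∧ E.fill y ∈ L3) →
      ∀ F : SContext ABC d, (F.fill x ∈ L3 ↔ F.fill y ∈ L3) := by
  intro d _ x y hxy ⟨E, hEx, hEy⟩ F
  constructor
  · exact L3Aux.main_dir x y hxy E hEx hEy F
  · exact L3Aux.main_dir y x (fun i => (hxy i).symm) E hEy hEx F
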